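/- Let M be a positive integer, let τ be an irrational real number, and let p/q be a convergent of the continued fraction expansion of τ with q > 6M. Let A, B, μ be real numbers with A > 0 and B > 1, and set ε := ‖μq‖ − M·‖τq‖, where ‖x‖ denotes the distance from x to the nearest integer. If ε > 0, then there is no solution in positive integers u, v, w to the inequality 0 < |uτ − v + μ| < A·B^{−w} with u ≤ M and w ≥ log(Aq/ε)/log B. -/

import Mathlib

/-- The distance from a real number to the nearest integer. -/
noncomputable def distNearestInt (x : ℝ) : ℝ := |x - round x|

lemma abs_sub_round_le_int (x : ℝ) (n : ℤ) : |x - round x| ≤ |x - n| := by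
  rcases eq_or_ne n (round x) with h | h
  · subst h; exact le_rfl
  · have h1 : (1 : ℝ) ≤ |(round x : ℝ) - n| := by
      have h0 : (1 : ℤ) ≤ |round x - n| :=
        Int.one_le_abs (sub_ne_zero.mpr (Ne.symm h))
      calc (1:ℝ) = ((1:ℤ):ℝ) := by norm_num
        _ ≤ ((|round x - n| : ℤ) : ℝ) := by exact_mod_cast h0
        _ = |(round x : ℝ) - n| := by push_cast; ring_nf
    have h2 : |x - round x| ≤ 1 / 2 := abs_sub_round x
    have h3 : |(round x : ℝ) - n| ≤ |(round x:ℝ) - x| + |x - n| := abs_sub_le _ _ _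
    have h4 : |(round x : ℝ) - x| = |x - round x| := abs_sub_comm _ _
    linarith

theorem baker_davenport_reduction (M : ℕ) (hM : 0 < M) (τ : ℝ) (hτ : Irrational τ)
    (p : ℤ) (q : ℕ) (hq : 0 < q)
    (hconv : ∃ i : ℕ, (GenContFract.of τ).convs i = (p : ℝ) / q)
    (hq6M : 6 * M < q) (A B μ : ℝ) (hA : 0 < A) (hB : 1 < B)
    (ε : ℝ) (hε : ε = distNearestInt (μ * q) - M * distNearestInt (τ * q)) (hεpos : 0 < ε) :
    ¬ ∃ u v w : ℕ, 0 < u ∧ 0 < v ∧ 0 < w ∧ u ≤ M ∧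
        Real.log (A * q / ε) / Real.log B ≤ w ∧
        0 < |(u : ℝ) * τ - v + μ| ∧ |(u : ℝ) * τ - v + μ| < A * B ^ (-(w : ℤ)) := by
  rintro ⟨u, v, w, hu, hv, hw, huM, hlog, hDpos, hDlt⟩
  set D : ℝ := (u : ℝ) * τ - v + μ with hD
  have hq0 : (0 : ℝ) < q := by exact_mod_cast hq
  have hB0 : (0 : ℝ) < B := lt_trans one_pos hB
  have hlogB : 0 < Real.log B := Real.log_pos hB
  have hAqε : 0 < A * q / ε := by positivity
  have hBw : (0 : ℝ) < B ^ w := pow_pos hB0 w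
  -- B^w ≥ A q / ε
  have h1 : A * q / ε ≤ B ^ w := by
    have h2 : Real.log (A * q / ε) ≤ w * Real.log B := by
      rwa [div_le_iff₀ hlogB] at hlog
    calc A * q / ε = Real.exp (Real.log (A * q / ε)) := (Real.exp_log hAqε).symm
      _ ≤ Real.exp ((w : ℝ) * Real.log B) := Real.exp_le_exp.mpr h2
      _ = B ^ w := by
          have : (w : ℝ) * Real.log B = Real.log (B ^ w) := by
            rw [Real.log_pow]
          rw [this, Real.exp_log hBw]
  have h3 : A * B ^ (-(w : ℤ)) * q ≤ ε := by
    rw [zpow_neg, zpow_natCast]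
    have heq : A * (B ^ w)⁻¹ * q = A * q / B ^ w := by ring
    rw [heq, div_le_iff₀ hBw]
    rw [div_le_iff₀ hεpos] at h1
    nlinarith
  -- key triangle inequality
  set r : ℤ := round (τ * q) with hr
  have key : distNearestInt (μ * q) ≤ q * |D| + u * distNearestInt (τ * q) := by
    have h5 := abs_sub_round_le_int (μ * q) ((q : ℤ) * v - u * r)
    calc distNearestInt (μ * q) ≤ |μ * q - (((q : ℤ) * v - u * r : ℤ) : ℝ)| := h5
      _ = |(q : ℝ) * D - (u : ℝ) * (τ * q - r)| := by rw [hD]; push_cast; ring_nf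
      _ ≤ |(q : ℝ) * D| + |(u : ℝ) * (τ * q - r)| := abs_sub _ _
      _ = q * |D| + u * |τ * q - r| := by
          rw [abs_mul, abs_mul, abs_of_nonneg (le_of_lt hq0),
            abs_of_nonneg (by positivity : (0:ℝ) ≤ (u:ℝ))]
      _ = q * |D| + u * distNearestInt (τ * q) := rfl
  have huε : (u : ℝ) ≤ M := by exact_mod_cast huM
  have hdn : 0 ≤ distNearestInt (τ * q) := abs_nonneg _
  have hle : ε ≤ q * |D| := by
    have := mul_le_mul_of_nonneg_right huε hdn
    rw [hε]; linarith
  have hlt2 : q * |D| < ε := by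
    calc q * |D| < q * (A * B ^ (-(w : ℤ))) := by
          exact mul_lt_mul_of_pos_left hDlt hq0
      _ = A * B ^ (-(w : ℤ)) * q := by ring
      _ ≤ ε := h3
  linarith
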